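/- Let h ≥ 1 be an integer, ε ∈ ℂ*, and γ : ℤ → ℂ with γ(n+2h) = ε·γ(n) for all n. Suppose X : ℤ → ℂ* satisfies X(n+2h)·X(n) = −(1/P(n))·(1/P(n) + γ(n)) for all n, where P(n) = ∏_{k=1}^{2h−1} X(n+k). Then u(l,m) := i/∏_{k=0}^{2h−1} X(l − 2h·m + k) (with i the imaginary unit) satisfies ε·u(l+1,m+1) − u(l,m) = ε/u(l,m+1) − 1/u(l+1,m) for all l,m, and satisfies the periodicity u(l+2h, m+1) = u(l,m). -/

import Mathlib

theorem stmt_5 (h : ℕ) (hh : 1 ≤ h) (ε : ℂ) (hε : ε ≠ 0) (γ : ℤ → ℂ)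
    (hγ : ∀ n : ℤ, γ (n + 2 * h) = ε * γ n)
    (X : ℤ → ℂ) (hX : ∀ n : ℤ, X n ≠ 0)
    (hXeq : ∀ n : ℤ,
      X (n + 2 * h) * X n
        = -(1 / ∏ k ∈ Finset.range (2 * h - 1), X (n + k + 1))
            * (1 / (∏ k ∈ Finset.range (2 * h - 1), X (n + k + 1)) + γ n))
    (u : ℤ × ℤ → ℂ)
    (hu : ∀ l m : ℤ,
      u (l, m) = Complex.I / ∏ k ∈ Finset.range (2 * h), X (l - 2 * h * m + k)) :
    (∀ l m : ℤ,
      ε * u (l + 1, m + 1) - u (l, m) = ε / u (l, m + 1) - 1 / u (l + 1, m)) ∧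
    (∀ l m : ℤ, u (l + 2 * h, m + 1) = u (l, m)) := by
  obtain ⟨N, hN⟩ : ∃ N, 2 * h = N + 1 := ⟨2 * h - 1, by omega⟩
  have hN' : 2 * h - 1 = N := by omega
  simp only [hN'] at hXeq
  set P : ℤ → ℂ := fun n => ∏ k ∈ Finset.range N, X (n + k + 1) with hPdef
  set Q : ℤ → ℂ := fun n => ∏ k ∈ Finset.range (2 * h), X (n + k) with hQdef
  have hP : ∀ n, P n ≠ 0 := fun n => Finset.prod_ne_zero_iff.2 fun k _ => hX _
  have hQne : ∀ n, Q n ≠ 0 := fun n => Finset.prod_ne_zero_iff.2 fun k _ => hX _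
  have hQ1 : ∀ n : ℤ, Q n = X n * P n := by
    intro n
    simp only [hQdef, hPdef, hN, Finset.prod_range_succ']
    rw [mul_comm]
    congr 1
    · push_cast; ring
    · exact Finset.prod_congr rfl fun k _ => by push_cast; ring_nf
  have hQ2 : ∀ n : ℤ, Q (n + 1) = P n * X (n + 2 * h) := by
    intro n
    simp only [hQdef, hPdef, hN, Finset.prod_range_succ]
    congr 1
    · exact Finset.prod_congr rfl fun k _ => by push_cast; ring_nf
    · congr 1; push_cast; omega
  have hkey : ∀ n : ℤ, X (n + 2 * h) * X n * (P n * P n) = -(1 + γ n * P n) := by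
    intro n
    have e : X (n + 2 * h) * X n = -(1 / P n) * (1 / P n + γ n) := hXeq n
    have := hP n
    field_simp at e
    linear_combination e
  have hA : ∀ n : ℤ, Q (n + 1) + 1 / Q n = -γ n / X n := by
    intro n
    rw [hQ2, hQ1]
    have := hP n; have := hX n; have := hX (n + 2 * h)
    field_simp
    linear_combination hkey n
  have hB : ∀ n : ℤ, 1 / Q (n + 1) + Q n = -γ n / X (n + 2 * h) := by
    intro n
    rw [hQ2, hQ1]
    have := hP n; have := hX n; have := hX (n + 2 * h)
    field_simp
    linear_combination hkey n
  have hu' : ∀ l m : ℤ, u (l, m) = Complex.I / Q (l - 2 * h * m) := by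
    intro l m; rw [hu, hQdef]
  constructor
  · intro l m
    set n : ℤ := l - 2 * h * m with hn
    set n' : ℤ := n - 2 * h with hn'
    have e1 : l + 1 - 2 * h * (m + 1) = n' + 1 := by rw [hn', hn]; ring
    have e2 : l - 2 * h * (m + 1) = n' := by rw [hn', hn]; ring
    have e3 : l + 1 - 2 * h * m = n + 1 := by rw [hn]; ring
    have hnn : n' + 2 * h = n := by rw [hn']; ring
    rw [hu' (l + 1) (m + 1), hu' l m, hu' l (m + 1), hu' (l + 1) m, e1, e2, e3]
    have main : ε * (1 / Q (n' + 1) + Q n') = Q (n + 1) + 1 / Q n := by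
      rw [hA n, hB n', hnn, ← hnn, hγ n', hnn]
      ring
    rw [← hn, div_div_eq_mul_div, one_div_div]
    simp only [Complex.div_I]
    linear_combination Complex.I * main
  · intro l m
    have e : l + 2 * h - 2 * h * (m + 1) = l - 2 * h * m := by ring
    rw [hu' (l + 2 * h) (m + 1), hu' l m, e]
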